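/- For 0 < r < 1, the matrices T(r) and T(-r/(1-r)) are mutually inverse: for all m, n, ∑_k t^{r}_{mk} · t^{-r/(1-r)}_{kn} = δ_{mn}, where t^{s}_{nk} = C(k,n)(1-s)^{n+1} s^{k-n} for k ≥ n and 0 otherwise. -/

import Mathlib

/-- The Taylor matrix of order `s`. -/
noncomputable def taylorEntry (s : ℝ) (n k : ℕ) : ℝ :=
  if n ≤ k then (k.choose n : ℝ) * (1 - s) ^ (n + 1) * s ^ (k - n) else 0

lemma alt_sum_real (d : ℕ) :
    ∑ j ∈ Finset.range (d + 1), (-1 : ℝ) ^ j * (d.choose j : ℝ)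
      = if d = 0 then 1 else 0 := by
  have h := Int.alternating_sum_range_choose (n := d)
  have h2 := congrArg (fun z : ℤ => (z : ℝ)) h
  push_cast at h2
  convert h2 using 2

/-- For `0 < r < 1`, the Taylor matrices `T(r)` and `T(-r/(1-r))` are mutually inverse :
for all `m, n`, `∑_k t^r_{m k} · t^{-r/(1-r)}_{k n} = δ_{m n}`. -/
theorem taylor_inverse (r : ℝ) (hr0 : 0 < r) (hr1 : r < 1) (m n : ℕ) :
    HasSum (fun k => taylorEntry r m k * taylorEntry (-r / (1 - r)) k n)
      (if m = n then 1 else 0) := by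
  have hu : (0:ℝ) < 1 - r := by linarith
  have hu' : (1 - r) ≠ 0 := ne_of_gt hu
  rcases le_or_gt m n with hmn | hnm
  · -- finite support in Icc m n
    have key : ∀ k ∉ Finset.Icc m n,
        taylorEntry r m k * taylorEntry (-r / (1 - r)) k n = 0 := by
      intro k hk
      simp only [Finset.mem_Icc, not_and_or, not_le] at hk
      rcases hk with h | h
      · have : ¬ m ≤ k := by omega
        simp [taylorEntry, this]
      · have : ¬ k ≤ n := by omega
        simp [taylorEntry, this]
    have hs := hasSum_sum_of_ne_finset_zero (L := SummationFilter.unconditional ℕ) key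
    have hsum : ∑ k ∈ Finset.Icc m n, taylorEntry r m k * taylorEntry (-r / (1 - r)) k n
        = if m = n then 1 else 0 := by
      set d := n - m with hd
      have hn : n = m + d := by omega
      rw [← Finset.Ico_add_one_right_eq_Icc, Finset.sum_Ico_eq_sum_range]
      have hrange : n + 1 - m = d + 1 := by omega
      rw [hrange]
      have h1s : 1 - (-r / (1 - r)) = (1 - r)⁻¹ := by field_simp; ring
      have hterm : ∀ j ∈ Finset.range (d + 1),
          taylorEntry r m (m + j) * taylorEntry (-r / (1 - r)) (m + j) n
            = ((n.choose m : ℝ) * (r / (1 - r)) ^ d * (-1) ^ d) * ((-1 : ℝ) ^ j * (d.choose j : ℝ)) := by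
        intro j hj
        rw [Finset.mem_range] at hj
        have hjd : j ≤ d := by omega
        obtain ⟨e, he⟩ : ∃ e, d = j + e := ⟨d - j, by omega⟩
        have h1 : m ≤ m + j := by omega
        have h2 : m + j ≤ n := by omega
        have hchoose : ((n.choose (m + j)) : ℝ) * ((m + j).choose m : ℝ)
            = (n.choose m : ℝ) * ((j + e).choose j : ℝ) := by
          have h7 := Nat.choose_mul (n := n) h1
          have h3 : n - m = j + e := by omega
          have h4 : m + j - m = j := by omega
          rw [h3, h4] at h7
          exact_mod_cast h7
        have h5 : m + j - m = j := by omega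
        have h6 : n - (m + j) = e := by omega
        simp only [taylorEntry, if_pos h1, if_pos h2, h1s, h5, h6]
        rw [he]
        calc ((m + j).choose m : ℝ) * (1 - r) ^ (m + 1) * r ^ j *
              ((n.choose (m + j) : ℝ) * ((1 - r)⁻¹) ^ (m + j + 1) * (-r / (1 - r)) ^ e)
            = ((n.choose (m + j)) : ℝ) * ((m + j).choose m : ℝ) *
              ((1 - r) ^ (m + 1) * r ^ j * ((1 - r)⁻¹) ^ (m + j + 1) * (-r / (1 - r)) ^ e) := by
              ring
          _ = (n.choose m : ℝ) * ((j + e).choose j : ℝ) *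
              ((1 - r) ^ (m + 1) * r ^ j * ((1 - r)⁻¹) ^ (m + j + 1) * (-r / (1 - r)) ^ e) := by
              rw [hchoose]
          _ = (n.choose m : ℝ) * (r / (1 - r)) ^ (j + e) * (-1) ^ (j + e) *
              ((-1 : ℝ) ^ j * ((j + e).choose j : ℝ)) := by
              have hm1 : ((-1:ℝ)) ^ (j * 2) = 1 := by
                rw [mul_comm, pow_mul]; simp
              rw [neg_div, neg_pow, div_pow, div_pow, inv_pow, pow_add, pow_add, pow_add, pow_add, pow_add]
              field_simp
              ring_nf
              rw [hm1]
              ring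
      rw [Finset.sum_congr rfl hterm, ← Finset.mul_sum, alt_sum_real]
      by_cases hd0 : d = 0
      · have hmn' : m = n := by omega
        simp [hd0, hmn']
      · have hmn' : ¬ m = n := by omega
        simp [hd0, hmn']
    rwa [hsum] at hs
  · have h0 : (fun k => taylorEntry r m k * taylorEntry (-r / (1 - r)) k n) = fun _ => (0:ℝ) := by
      funext k
      by_cases h : m ≤ k
      · have : ¬ k ≤ n := by omega
        simp [taylorEntry, this]
      · simp [taylorEntry, h]
    rw [h0, if_neg (by omega)]
    exact hasSum_zero
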